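/- Define g on Σ = {u+iv : u > 0} by g(u+iv) = (-1 - i·cosh(2u)·sinh(2v))/(sinh(2u) + cosh(2u)·cosh(2v)). Then |g| < 1 on Σ, g satisfies the hyperbolic harmonic map equation, and g_z = -(cosh(2u)-1)·(cosh(2u) + sinh(2u)·cosh(2v) + i·sinh(2v))/(sinh(2u)+cosh(2u)·cosh(2v))²; in particular g_z never vanishes on Σ. -/

import Mathlib

open Complex
open ComplexConjugate
open Topology Filter

/-- Wirtinger derivative `∂_z = (∂_u - i ∂_v)/2` of a map `ℂ → ℂ`. -/
noncomputable def Wz (f : ℂ → ℂ) (p : ℂ) : ℂ :=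
  (1/2) * (fderiv ℝ f p 1 - I * fderiv ℝ f p I)

/-- Wirtinger derivative `∂_z̄ = (∂_u + i ∂_v)/2` of a map `ℂ → ℂ`. -/
noncomputable def Wzb (f : ℂ → ℂ) (p : ℂ) : ℂ :=
  (1/2) * (fderiv ℝ f p 1 + I * fderiv ℝ f p I)

/-- Wirtinger derivative `∂_z` of a real-valued function on `ℂ`. -/
noncomputable def WzR (h : ℂ → ℝ) (p : ℂ) : ℂ :=
  (1/2) * ((fderiv ℝ h p 1 : ℝ) - I * (fderiv ℝ h p I : ℝ))

/-- `1 - |w|²` as a complex number. -/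
noncomputable def NS (w : ℂ) : ℂ := ((1 - Complex.normSq w : ℝ) : ℂ)

/-- `η = 8i·conj(g)·g_z/(1-|g|²)²`. -/
noncomputable def Eta (g : ℂ → ℂ) (z : ℂ) : ℂ :=
  8 * I * conj (g z) * Wz g z / (NS (g z))^2

/-- Conjugated semitrough Gauss map. -/
noncomputable def gS2 (z : ℂ) : ℂ :=
  (-1 - I * (Real.cosh (2*z.re) : ℂ) * (Real.sinh (2*z.im) : ℂ))
    / ((Real.sinh (2*z.re) : ℂ) + (Real.cosh (2*z.re) : ℂ) * (Real.cosh (2*z.im) : ℂ))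


/- ===== Wirtinger machinery ===== -/


noncomputable def mkL (p q : ℂ) : ℂ →L[ℝ] ℂ :=
  p • (ContinuousLinearMap.id ℝ ℂ) + q • (Complex.conjCLE.toContinuousLinearMap)

lemma mkL_apply (p q h : ℂ) : mkL p q h = p * h + q * (conj h) := by
  simp [mkL, smul_eq_mul]

lemma hasF_const (c : ℂ) (z : ℂ) : HasFDerivAt (fun _ : ℂ => c) (mkL 0 0) z := by
  have h := hasFDerivAt_const (𝕜 := ℝ) c z
  convert h using 1
  ext x; simp [mkL_apply]

lemma hasF_conjpair (z : ℂ) : HasFDerivAt (fun w : ℂ => conj w) (mkL 0 1) z := by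
  have h := (Complex.conjCLE.toContinuousLinearMap).hasFDerivAt (x := z)
  have he : (⇑Complex.conjCLE.toContinuousLinearMap : ℂ → ℂ) = fun w => conj w := by
    funext w; simp
  rw [he] at h
  convert h using 1
  ext x; simp [mkL_apply]

lemma hasF_add {f g : ℂ → ℂ} {p q r s z : ℂ} (hf : HasFDerivAt f (mkL p q) z)
    (hg : HasFDerivAt g (mkL r s) z) :
    HasFDerivAt (fun w => f w + g w) (mkL (p + r) (q + s)) z := by
  have h := hf.add hg
  refine h.congr_fderiv ?_
  ext x; simp [mkL_apply]; ring

lemma hasF_sub {f g : ℂ → ℂ} {p q r s z : ℂ} (hf : HasFDerivAt f (mkL p q) z)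
    (hg : HasFDerivAt g (mkL r s) z) :
    HasFDerivAt (fun w => f w - g w) (mkL (p - r) (q - s)) z := by
  have h := hf.sub hg
  refine h.congr_fderiv ?_
  ext x; simp [mkL_apply]; ring

lemma hasF_mul {f g : ℂ → ℂ} {p q r s z : ℂ} (hf : HasFDerivAt f (mkL p q) z)
    (hg : HasFDerivAt g (mkL r s) z) :
    HasFDerivAt (fun w => f w * g w) (mkL (f z * r + g z * p) (f z * s + g z * q)) z := by
  have h := hf.mul hg
  refine h.congr_fderiv ?_
  ext x; simp [mkL_apply, smul_eq_mul]; ring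

lemma hasF_inv {g : ℂ → ℂ} {r s z : ℂ}
    (hg : HasFDerivAt g (mkL r s) z) (hz : g z ≠ 0) :
    HasFDerivAt (fun w => (g w)⁻¹) (mkL (-(r / (g z) ^ 2)) (-(s / (g z) ^ 2))) z := by
  have h := (hasDerivAt_inv hz).comp_hasFDerivAt z hg
  refine h.congr_fderiv ?_
  ext x; simp [mkL_apply, smul_eq_mul]; field_simp; ring

lemma hasF_div {f g : ℂ → ℂ} {p q r s z : ℂ} (hf : HasFDerivAt f (mkL p q) z)
    (hg : HasFDerivAt g (mkL r s) z) (hz : g z ≠ 0) :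
    HasFDerivAt (fun w => f w / g w)
      (mkL ((g z * p - f z * r) / (g z) ^ 2) ((g z * q - f z * s) / (g z) ^ 2)) z := by
  have h := hasF_mul hf (hasF_inv hg hz)
  have he : (fun w => f w * (g w)⁻¹) = fun w => f w / g w := by
    funext w; rw [div_eq_mul_inv]
  rw [he] at h
  convert h using 2 <;> field_simp <;> ring

lemma hasF_plus (z : ℂ) : HasFDerivAt (fun w : ℂ => w + conj w) (mkL 1 1) z := by
  have h := (hasFDerivAt_id z).add (hasF_conjpair z)
  refine h.congr_fderiv ?_
  ext x; simp [mkL_apply]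

lemma hasF_minus (z : ℂ) : HasFDerivAt (fun w : ℂ => w - conj w) (mkL 1 (-1)) z := by
  have h := (hasFDerivAt_id z).sub (hasF_conjpair z)
  refine h.congr_fderiv ?_
  ext x; simp [mkL_apply]; ring

lemma hasF_coshP (z : ℂ) : HasFDerivAt (fun w : ℂ => Complex.cosh (w + conj w))
    (mkL (Complex.sinh (z + conj z)) (Complex.sinh (z + conj z))) z := by
  have h := (Complex.hasDerivAt_cosh (z + conj z)).comp_hasFDerivAt z (hasF_plus z)
  refine h.congr_fderiv ?_
  ext x; simp [mkL_apply, smul_eq_mul]; ring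

lemma hasF_sinhP (z : ℂ) : HasFDerivAt (fun w : ℂ => Complex.sinh (w + conj w))
    (mkL (Complex.cosh (z + conj z)) (Complex.cosh (z + conj z))) z := by
  have h := (Complex.hasDerivAt_sinh (z + conj z)).comp_hasFDerivAt z (hasF_plus z)
  refine h.congr_fderiv ?_
  ext x; simp [mkL_apply, smul_eq_mul]; ring

lemma hasF_cosM (z : ℂ) : HasFDerivAt (fun w : ℂ => Complex.cos (w - conj w))
    (mkL (-Complex.sin (z - conj z)) (Complex.sin (z - conj z))) z := by
  have h := (Complex.hasDerivAt_cos (z - conj z)).comp_hasFDerivAt z (hasF_minus z)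
  refine h.congr_fderiv ?_
  ext x; simp [mkL_apply, smul_eq_mul]; ring

lemma hasF_sinM (z : ℂ) : HasFDerivAt (fun w : ℂ => Complex.sin (w - conj w))
    (mkL (Complex.cos (z - conj z)) (-Complex.cos (z - conj z))) z := by
  have h := (Complex.hasDerivAt_sin (z - conj z)).comp_hasFDerivAt z (hasF_minus z)
  refine h.congr_fderiv ?_
  ext x; simp [mkL_apply, smul_eq_mul]; ring

lemma wz_eq {f : ℂ → ℂ} {p q z : ℂ} (hf : HasFDerivAt f (mkL p q) z) : Wz f z = p := by
  unfold Wz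
  rw [hf.fderiv, mkL_apply, mkL_apply]
  rw [Complex.conj_I, map_one]
  linear_combination ((q - p)/2) * Complex.I_sq

lemma wzb_eq {f : ℂ → ℂ} {p q z : ℂ} (hf : HasFDerivAt f (mkL p q) z) : Wzb f z = q := by
  unfold Wzb
  rw [hf.fderiv, mkL_apply, mkL_apply]
  rw [Complex.conj_I, map_one]
  linear_combination ((p - q)/2) * Complex.I_sq


/- ===== specific functions ===== -/

noncomputable def F1 (w : ℂ) : ℂ :=
  (-1 - Complex.cosh (w + conj w) * Complex.sin (w - conj w)) /
    (Complex.sinh (w + conj w) + Complex.cosh (w + conj w) * Complex.cos (w - conj w))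

noncomputable def Gc (w : ℂ) : ℂ :=
  (-(Complex.cosh (w + conj w) - 1) *
      (Complex.cosh (w + conj w) + Complex.sinh (w + conj w) * Complex.cos (w - conj w)
        + Complex.sin (w - conj w))) /
    ((Complex.sinh (w + conj w) + Complex.cosh (w + conj w) * Complex.cos (w - conj w)) *
      (Complex.sinh (w + conj w) + Complex.cosh (w + conj w) * Complex.cos (w - conj w)))

lemma coshP_eq (w : ℂ) : Complex.cosh (w + conj w) = ((Real.cosh (2*w.re) : ℝ) : ℂ) := by
  rw [Complex.add_conj, Complex.ofReal_cosh]

lemma sinhP_eq (w : ℂ) : Complex.sinh (w + conj w) = ((Real.sinh (2*w.re) : ℝ) : ℂ) := by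
  rw [Complex.add_conj, Complex.ofReal_sinh]

lemma cosM_eq (w : ℂ) : Complex.cos (w - conj w) = ((Real.cosh (2*w.im) : ℝ) : ℂ) := by
  rw [Complex.sub_conj, Complex.cos_mul_I, Complex.ofReal_cosh]

lemma sinM_eq (w : ℂ) : Complex.sin (w - conj w) = ((Real.sinh (2*w.im) : ℝ) : ℂ) * I := by
  rw [Complex.sub_conj, Complex.sin_mul_I, Complex.ofReal_sinh]

lemma gS2_eq_F1 : gS2 = F1 := by
  funext w
  unfold gS2 F1
  rw [coshP_eq, sinhP_eq, cosM_eq, sinM_eq]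
  congr 1
  ring

lemma denom_pos (w : ℂ) (hw : 0 < w.re) :
    0 < Real.sinh (2*w.re) + Real.cosh (2*w.re) * Real.cosh (2*w.im) := by
  have h1 : 0 < Real.sinh (2*w.re) := Real.sinh_pos_iff.2 (by linarith)
  nlinarith [Real.cosh_pos (x := 2*w.re), Real.cosh_pos (x := 2*w.im)]

lemma denom_ne (w : ℂ) (hw : 0 < w.re) :
    Complex.sinh (w + conj w) + Complex.cosh (w + conj w) * Complex.cos (w - conj w) ≠ 0 := by
  rw [sinhP_eq, coshP_eq, cosM_eq, ← Complex.ofReal_mul, ← Complex.ofReal_add]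
  exact_mod_cast (denom_pos w hw).ne'

lemma hasF_F1 (w : ℂ) (hD : Complex.sinh (w + conj w)
    + Complex.cosh (w + conj w) * Complex.cos (w - conj w) ≠ 0) :
    HasFDerivAt F1 (mkL
      (((Complex.sinh (w + conj w) + Complex.cosh (w + conj w) * Complex.cos (w - conj w)) *
          (0 - (Complex.cosh (w + conj w) * Complex.cos (w - conj w)
            + Complex.sin (w - conj w) * Complex.sinh (w + conj w)))
        - (-1 - Complex.cosh (w + conj w) * Complex.sin (w - conj w)) *
          (Complex.cosh (w + conj w) + (Complex.cosh (w + conj w) * (-Complex.sin (w - conj w))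
            + Complex.cos (w - conj w) * Complex.sinh (w + conj w)))) /
        (Complex.sinh (w + conj w) + Complex.cosh (w + conj w) * Complex.cos (w - conj w)) ^ 2)
      (((Complex.sinh (w + conj w) + Complex.cosh (w + conj w) * Complex.cos (w - conj w)) *
          (0 - (Complex.cosh (w + conj w) * (-Complex.cos (w - conj w))
            + Complex.sin (w - conj w) * Complex.sinh (w + conj w)))
        - (-1 - Complex.cosh (w + conj w) * Complex.sin (w - conj w)) *
          (Complex.cosh (w + conj w) + (Complex.cosh (w + conj w) * Complex.sin (w - conj w)
            + Complex.cos (w - conj w) * Complex.sinh (w + conj w)))) /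
        (Complex.sinh (w + conj w) + Complex.cosh (w + conj w) * Complex.cos (w - conj w)) ^ 2))
      w :=
  hasF_div (hasF_sub (hasF_const (-1) w) (hasF_mul (hasF_coshP w) (hasF_sinM w)))
    (hasF_add (hasF_sinhP w) (hasF_mul (hasF_coshP w) (hasF_cosM w))) hD

lemma hasF_neg {f : ℂ → ℂ} {p q z : ℂ} (hf : HasFDerivAt f (mkL p q) z) :
    HasFDerivAt (fun w => -(f w)) (mkL (-p) (-q)) z := by
  have h := hf.neg
  refine h.congr_fderiv ?_
  ext x; simp [mkL_apply]; ring

lemma hasF_Gc (w : ℂ) (hD : Complex.sinh (w + conj w)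
    + Complex.cosh (w + conj w) * Complex.cos (w - conj w) ≠ 0) :
    HasFDerivAt Gc (mkL
      ((((Complex.sinh (w + conj w) + (Complex.cosh (w + conj w) * Complex.cos (w - conj w))) * (Complex.sinh (w + conj w) + (Complex.cosh (w + conj w) * Complex.cos (w - conj w)))) * ((-(Complex.cosh (w + conj w) - (1))) * ((Complex.sinh (w + conj w) + (Complex.sinh (w + conj w) * (-Complex.sin (w - conj w)) + Complex.cos (w - conj w) * Complex.cosh (w + conj w))) + Complex.cos (w - conj w)) + ((Complex.cosh (w + conj w) + (Complex.sinh (w + conj w) * Complex.cos (w - conj w))) + Complex.sin (w - conj w)) * (-(Complex.sinh (w + conj w) - 0))) - ((-(Complex.cosh (w + conj w) - (1))) * ((Complex.cosh (w + conj w) + (Complex.sinh (w + conj w) * Complex.cos (w - conj w))) + Complex.sin (w - conj w))) * ((Complex.sinh (w + conj w) + (Complex.cosh (w + conj w) * Complex.cos (w - conj w))) * (Complex.cosh (w + conj w) + (Complex.cosh (w + conj w) * (-Complex.sin (w - conj w)) + Complex.cos (w - conj w) * Complex.sinh (w + conj w))) + (Complex.sinh (w + conj w) + (Complex.cosh (w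 + conj w) * Complex.cos (w - conj w))) * (Complex.cosh (w + conj w) + (Complex.cosh (w + conj w) * (-Complex.sin (w - conj w)) + Complex.cos (w - conj w) * Complex.sinh (w + conj w))))) / (((Complex.sinh (w + conj w) + (Complex.cosh (w + conj w) * Complex.cos (w - conj w))) * (Complex.sinh (w + conj w) + (Complex.cosh (w + conj w) * Complex.cos (w - conj w))))) ^ 2)
      ((((Complex.sinh (w + conj w) + (Complex.cosh (w + conj w) * Complex.cos (w - conj w))) * (Complex.sinh (w + conj w) + (Complex.cosh (w + conj w) * Complex.cos (w - conj w)))) * ((-(Complex.cosh (w + conj w) - (1))) * ((Complex.sinh (w + conj w) + (Complex.sinh (w + conj w) * Complex.sin (w - conj w) + Complex.cos (w - conj w) * Complex.cosh (w + conj w))) + (-Complex.cos (w - conj w))) + ((Complex.cosh (w + conj w) + (Complex.sinh (w + conj w) * Complex.cos (w - conj w))) + Complex.sin (w - conj w)) * (-(Complex.sinh (w + conj w) - 0))) - ((-(Complex.cosh (w + conj w) - (1))) * ((Complex.cosh (w + conj w) + (Complex.sinh (w + conj w) * Complex.cos (w - conj w))) + Complex.sin (w - conj w))) * ((Complex.sinh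 (w + conj w) + (Complex.cosh (w + conj w) * Complex.cos (w - conj w))) * (Complex.cosh (w + conj w) + (Complex.cosh (w + conj w) * Complex.sin (w - conj w) + Complex.cos (w - conj w) * Complex.sinh (w + conj w))) + (Complex.sinh (w + conj w) + (Complex.cosh (w + conj w) * Complex.cos (w - conj w))) * (Complex.cosh (w + conj w) + (Complex.cosh (w + conj w) * Complex.sin (w - conj w) + Complex.cos (w - conj w) * Complex.sinh (w + conj w))))) / (((Complex.sinh (w + conj w) + (Complex.cosh (w + conj w) * Complex.cos (w - conj w))) * (Complex.sinh (w + conj w) + (Complex.cosh (w + conj w) * Complex.cos (w - conj w))))) ^ 2))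
      w :=
  (hasF_div (hasF_mul (hasF_neg (hasF_sub (hasF_coshP w) (hasF_const (1) w))) (hasF_add (hasF_add (hasF_coshP w) (hasF_mul (hasF_sinhP w) (hasF_cosM w))) (hasF_sinM w))) (hasF_mul (hasF_add (hasF_sinhP w) (hasF_mul (hasF_coshP w) (hasF_cosM w))) (hasF_add (hasF_sinhP w) (hasF_mul (hasF_coshP w) (hasF_cosM w)))) (mul_ne_zero hD hD))

lemma wz_gS2 (w : ℂ) (hw : 0 < w.re) : Wz gS2 w = Gc w := by
  rw [gS2_eq_F1]
  have hD := denom_ne w hw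
  rw [wz_eq (hasF_F1 w hD)]
  unfold Gc
  rw [div_eq_div_iff (pow_ne_zero 2 hD) (mul_ne_zero hD hD)]
  have h1 := Complex.cosh_sq_sub_sinh_sq (w + conj w)
  have h2 := Complex.cos_sq_add_sin_sq (w - conj w)
  set CS := Complex.cosh (w + conj w)
  set SS := Complex.sinh (w + conj w)
  set CT := Complex.cos (w - conj w)
  set ST := Complex.sin (w - conj w)
  linear_combination ((1 + ST - ST^2 - CT^2) * (SS + CS*CT)^2) * h1
    + ((-1 - SS^2) * (SS + CS*CT)^2) * h2

set_option maxHeartbeats 4000000 in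
theorem stmt18 : ∀ z : ℂ, 0 < z.re →
    ‖gS2 z‖ < 1 ∧
    (Wzb (Wz gS2) z + (2 * conj (gS2 z) / NS (gS2 z)) * Wz gS2 z * Wzb gS2 z = 0) ∧
    Wz gS2 z = -((Real.cosh (2*z.re) : ℂ) - 1)
        * ((Real.cosh (2*z.re) : ℂ) + (Real.sinh (2*z.re) : ℂ) * (Real.cosh (2*z.im) : ℂ)
            + I * (Real.sinh (2*z.im) : ℂ))
        / ((Real.sinh (2*z.re) : ℂ) + (Real.cosh (2*z.re) : ℂ) * (Real.cosh (2*z.im) : ℂ))^2 ∧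
    Wz gS2 z ≠ 0 := by
  intro z hz
  have hD := denom_ne z hz
  have hd0 : 0 < Real.sinh (2*z.re) + Real.cosh (2*z.re) * Real.cosh (2*z.im) := denom_pos z hz
  have hca : 1 < Real.cosh (2*z.re) := by
    rw [Real.one_lt_cosh]; positivity
  have hcc : (1:ℝ) ≤ Real.cosh (2*z.im) := Real.one_le_cosh _
  have hsb : 0 < Real.sinh (2*z.re) := Real.sinh_pos_iff.2 (by linarith)
  have hid1 := Real.cosh_sq_sub_sinh_sq (2*z.re)
  have hid2 := Real.cosh_sq_sub_sinh_sq (2*z.im)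
  have hns : Complex.normSq (gS2 z) =
      (1 + (Real.cosh (2*z.re) * Real.sinh (2*z.im))^2) /
        (Real.sinh (2*z.re) + Real.cosh (2*z.re) * Real.cosh (2*z.im))^2 := by
    unfold gS2
    rw [Complex.normSq_div]
    rw [show ((Real.sinh (2*z.re) : ℂ) + (Real.cosh (2*z.re) : ℂ) * (Real.cosh (2*z.im) : ℂ))
        = ((Real.sinh (2*z.re) + Real.cosh (2*z.re) * Real.cosh (2*z.im) : ℝ) : ℂ) by push_cast; ring]
    rw [Complex.normSq_ofReal]
    congr 1
    · rw [show (-1 - I * (Real.cosh (2*z.re) : ℂ) * (Real.sinh (2*z.im) : ℂ))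
          = ((-1 : ℝ) : ℂ) + ((-(Real.cosh (2*z.re) * Real.sinh (2*z.im)) : ℝ) : ℂ) * I by
            push_cast; ring]
      rw [Complex.normSq_add_mul_I]
      ring
    · ring
  have hkey : 1 + (Real.cosh (2*z.re) * Real.sinh (2*z.im))^2 <
      (Real.sinh (2*z.re) + Real.cosh (2*z.re) * Real.cosh (2*z.im))^2 := by
    nlinarith [hsb, hca, hcc, hid1, hid2]
  refine ⟨?_, ?_, ?_, ?_⟩
  · have h2 : ‖gS2 z‖^2 < 1 := by
      rw [Complex.sq_norm, hns, div_lt_one (by positivity)]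
      exact hkey
    nlinarith [norm_nonneg (gS2 z)]
  · -- PDE
    have hopen : IsOpen {w : ℂ | 0 < w.re} := isOpen_lt continuous_const Complex.continuous_re
    have hev : Wz gS2 =ᶠ[𝓝 z] Gc :=
      Filter.eventuallyEq_of_mem (hopen.mem_nhds hz) (fun w hw => wz_gS2 w hw)
    have hfd : Wzb (Wz gS2) z = Wzb Gc z := by unfold Wzb; rw [hev.fderiv_eq]
    have hwz := wz_eq (hasF_F1 z hD)
    have hwzb := wzb_eq (hasF_F1 z hD)
    rw [← gS2_eq_F1] at hwz hwzb
    have hconj : conj (gS2 z) = (-1 + I * (Real.cosh (2*z.re) : ℂ) * (Real.sinh (2*z.im) : ℂ))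
        / ((Real.sinh (2*z.re) : ℂ) + (Real.cosh (2*z.re) : ℂ) * (Real.cosh (2*z.im) : ℂ)) := by
      unfold gS2
      rw [map_div₀]
      congr 1
      · simp only [map_sub, map_mul, map_neg, map_one, Complex.conj_I, Complex.conj_ofReal]
        ring
      · simp only [map_add, map_mul, Complex.conj_ofReal]
    have hNS : NS (gS2 z) =
        (((Real.sinh (2*z.re) : ℂ) + (Real.cosh (2*z.re) : ℂ) * (Real.cosh (2*z.im) : ℂ))^2
          - (1 + ((Real.cosh (2*z.re) : ℂ) * (Real.sinh (2*z.im) : ℂ))^2))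
        / (((Real.sinh (2*z.re) : ℂ) + (Real.cosh (2*z.re) : ℂ) * (Real.cosh (2*z.im) : ℂ))^2) := by
      have hY : ((Real.sinh (2*z.re) + Real.cosh (2*z.re) * Real.cosh (2*z.im))^2 : ℝ) ≠ 0 := by
        positivity
      unfold NS
      rw [hns]
      rw [show (1:ℝ) - (1 + (Real.cosh (2*z.re) * Real.sinh (2*z.im))^2)
            / (Real.sinh (2*z.re) + Real.cosh (2*z.re) * Real.cosh (2*z.im))^2
          = ((Real.sinh (2*z.re) + Real.cosh (2*z.re) * Real.cosh (2*z.im))^2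
            - (1 + (Real.cosh (2*z.re) * Real.sinh (2*z.im))^2))
            / (Real.sinh (2*z.re) + Real.cosh (2*z.re) * Real.cosh (2*z.im))^2 from by
        field_simp]
      simp only [Complex.ofReal_div, Complex.ofReal_sub, Complex.ofReal_add, Complex.ofReal_mul,
        Complex.ofReal_pow, Complex.ofReal_one]
    have hDc : ((Real.sinh (2*z.re) : ℂ) + (Real.cosh (2*z.re) : ℂ) * (Real.cosh (2*z.im) : ℂ)) ≠ 0 := by
      rw [← Complex.ofReal_mul, ← Complex.ofReal_add]
      exact_mod_cast hd0.ne'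
    have hNSnum : (((Real.sinh (2*z.re) : ℂ) + (Real.cosh (2*z.re) : ℂ) * (Real.cosh (2*z.im) : ℂ))^2
          - (1 + ((Real.cosh (2*z.re) : ℂ) * (Real.sinh (2*z.im) : ℂ))^2)) ≠ 0 := by
      rw [show (((Real.sinh (2*z.re) : ℂ) + (Real.cosh (2*z.re) : ℂ) * (Real.cosh (2*z.im) : ℂ))^2
          - (1 + ((Real.cosh (2*z.re) : ℂ) * (Real.sinh (2*z.im) : ℂ))^2))
          = (((Real.sinh (2*z.re) + Real.cosh (2*z.re) * Real.cosh (2*z.im))^2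
            - (1 + (Real.cosh (2*z.re) * Real.sinh (2*z.im))^2) : ℝ) : ℂ) by push_cast; ring]
      exact_mod_cast (sub_pos.2 hkey).ne'
    rw [hfd, wzb_eq (hasF_Gc z hD), hwz, hwzb, hconj, hNS]
    rw [coshP_eq z, sinhP_eq z, cosM_eq z, sinM_eq z]
    have hA := Complex.cosh_sq_sub_sinh_sq (z + conj z)
    have hB := Complex.cos_sq_add_sin_sq (z - conj z)
    rw [coshP_eq z, sinhP_eq z] at hA
    rw [cosM_eq z, sinM_eq z] at hB
    have hI := Complex.I_sq
    set A : ℂ := ((Real.cosh (2*z.re) : ℝ) : ℂ) with hAdef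
    set B : ℂ := ((Real.sinh (2*z.re) : ℝ) : ℂ) with hBdef
    set C : ℂ := ((Real.cosh (2*z.im) : ℝ) : ℂ) with hCdef
    set Dd : ℂ := ((Real.sinh (2*z.im) : ℝ) : ℂ) with hDdef
    field_simp
    have hN' : (B + A * C) ^ 2 - (1 + A ^ 2 * Dd ^ 2) ≠ 0 := by
      convert hNSnum using 2; ring
    rw [mul_zero, add_div_eq_mul_add_div _ _ hN', div_eq_zero_iff]
    left
    linear_combination ((-4) * C^2*Dd^2 + (4) * B*C*Dd^2 + (5) * B*C*Dd^3*Complex.I + (-3) * B^2*Dd^2 + (-6) *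
      B^2*C^2*Dd^2 + (4) * B^3*C*Dd^2 + (8) * B^3*C*Dd^3*Complex.I + (-3) * B^4*Dd^2 + (-2) * B^4*C^2*Dd^2 +
      (3) * B^5*C*Dd^3*Complex.I + (-2) * A*Dd^3*Complex.I + (-2) * A*Dd^4 + (-2) * A*Dd^5*Complex.I + (2) *
      A*C^2*Dd^2 + (2) * A*C^2*Dd^3*Complex.I + (-7) * A*B*C*Dd^2 + (1) * A*B^2*Dd^3*Complex.I + (-2) *
      A*B^2*Dd^4 + (-4) * A*B^2*Dd^5*Complex.I + (2) * A*B^2*C^2*Dd^2 + (4) * A*B^2*C^2*Dd^3*Complex.I + (-7)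
      * A*B^3*C*Dd^2 + (3) * A*B^4*Dd^3*Complex.I + (-2) * A*B^4*Dd^5*Complex.I + (2) *
      A*B^4*C^2*Dd^3*Complex.I + (-4) * A^2*B*C*Dd^2 + (2) * A^2*B^2*Dd^2 + (2) * A^3*Dd^3*Complex.I + (2) *
      A^3*Dd^4 + (-2) * A^3*C^2*Dd^2 + (8) * A^3*B*C*Dd^2 + (-4) * A^3*B^2*Dd^3*Complex.I + (2) * A^4*Dd^2 +
      (-2) * A^4*Dd^4*Complex.I^2 + (2) * A^4*C^2*Dd^2 + (-4) * A^4*B*C*Dd^3*Complex.I + (2) *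
      A^5*Dd^3*Complex.I + (2) * A^5*Dd^5*Complex.I + (-2) * A^5*Dd^5*Complex.I^3 + (-4) *
      A^5*C^2*Dd^3*Complex.I) * hI + ((-4) * C^2 + (-4) * C^2*Dd^2 + (4) * C^4 + (3) * B*C + (3) *
      B*C*Dd*Complex.I + (4) * B*C*Dd^2 + (5) * B*C*Dd^3*Complex.I + (-4) * B*C^3 + (-5) * B*C^3*Dd*Complex.I
      + (-2) * B^2 + (-3) * B^2*Dd^2 + (1) * B^2*C^2 + (-2) * B^2*C^2*Dd^2 + (2) * B^2*C^4 + (1) * B^3*C + (3)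
      * B^3*C*Dd*Complex.I + (3) * B^3*C*Dd^3*Complex.I + (-3) * B^3*C^3*Dd*Complex.I + (-2) * A + (-4) *
      A*Dd*Complex.I + (-2) * A*Dd^2 + (-4) * A*Dd^3*Complex.I + (-2) * A*Dd^4 + (-2) * A*Dd^5*Complex.I + (3)
      * A*C^2 + (4) * A*C^2*Dd*Complex.I + (4) * A*C^2*Dd^2 + (4) * A*C^2*Dd^3*Complex.I + (-2) * A*C^4 + (-2)
      * A*C^4*Dd*Complex.I + (-4) * A*B*C + (-7) * A*B*C*Dd^2 + (7) * A*B*C^3 + (2) * A*B^2 + (2) *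
      A*B^2*Dd*Complex.I + (1) * A*B^2*Dd^3*Complex.I + (-2) * A*B^2*Dd^5*Complex.I + (1) * A*B^2*C^2 + (1) *
      A*B^2*C^2*Dd*Complex.I + (4) * A*B^2*C^2*Dd^3*Complex.I + (-2) * A*B^2*C^4*Dd*Complex.I + (-2) * A^2*C^2
      + (-4) * A^2*C^2*Dd^2 + (4) * A^2*C^4 + (4) * A^2*B*C + (4) * A^2*B*C*Dd*Complex.I + (-1) * A^2*B*C*Dd^2
      + (3) * A^2*B*C*Dd^3*Complex.I + (-1) * A^2*B*C^3 + (-3) * A^2*B*C^3*Dd*Complex.I + (-2) * A^3*Dd^2 +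
      (-4) * A^3*Dd^3*Complex.I + (-2) * A^3*Dd^5*Complex.I + (2) * A^3*C^2 + (2) * A^3*C^2*Dd*Complex.I + (1)
      * A^3*C^2*Dd^2 + (4) * A^3*C^2*Dd^3*Complex.I + (-1) * A^3*C^4 + (-2) * A^3*C^4*Dd*Complex.I) * hA +
      ((4) * C^2 + (-4) * B*C + (-5) * B*C*Dd*Complex.I + (3) * B^2 + (6) * B^2*C^2 + (-4) * B^3*C + (-8) *
      B^3*C*Dd*Complex.I + (1) * B^4 + (2) * B^4*C^2 + (-3) * B^5*C*Dd*Complex.I + (2) * A + (2) *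
      A*Dd*Complex.I + (2) * A*Dd^2 + (2) * A*Dd^3*Complex.I + (-2) * A*C^2 + (-2) * A*C^2*Dd*Complex.I + (7)
      * A*B*C + (-2) * A*B^2 + (-1) * A*B^2*Dd*Complex.I + (2) * A*B^2*Dd^2 + (4) * A*B^2*Dd^3*Complex.I +
      (-2) * A*B^2*C^2 + (-4) * A*B^2*C^2*Dd*Complex.I + (3) * A*B^3*C + (-1) * A*B^4*Dd*Complex.I + (2) *
      A*B^4*Dd^3*Complex.I + (-2) * A*B^4*C^2*Dd*Complex.I) * hB
  · rw [wz_gS2 z hz]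
    unfold Gc
    rw [coshP_eq z, sinhP_eq z, cosM_eq z, sinM_eq z]
    have hDc : ((Real.sinh (2*z.re) : ℂ) + (Real.cosh (2*z.re) : ℂ) * (Real.cosh (2*z.im) : ℂ)) ≠ 0 := by
      rw [← Complex.ofReal_mul, ← Complex.ofReal_add]
      exact_mod_cast hd0.ne'
    rw [div_eq_div_iff (mul_ne_zero hDc hDc) (pow_ne_zero 2 hDc)]
    ring
  · rw [wz_gS2 z hz]
    unfold Gc
    rw [coshP_eq z, sinhP_eq z, cosM_eq z, sinM_eq z]
    have hDc : ((Real.sinh (2*z.re) : ℂ) + (Real.cosh (2*z.re) : ℂ) * (Real.cosh (2*z.im) : ℂ)) ≠ 0 := by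
      rw [← Complex.ofReal_mul, ← Complex.ofReal_add]
      exact_mod_cast hd0.ne'
    apply div_ne_zero
    · apply mul_ne_zero
      · simp only [neg_ne_zero, sub_ne_zero]
        exact_mod_cast hca.ne'
      · intro h
        have hre := congrArg Complex.re h
        simp only [Complex.add_re, Complex.mul_re, Complex.ofReal_re, Complex.ofReal_im,
          Complex.I_re, Complex.I_im, Complex.zero_re, mul_zero, zero_mul, mul_one,
          sub_zero, add_zero] at hre
        nlinarith [hca, hsb, hcc, hre]
    · exact mul_ne_zero hDc hDc
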